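/- For 1 ≤ i ≤ n, the polynomial identity z(1+b+z(1+a))^{i-1}(az+b)^{n-i} = (-1)^n a^{-n-1} U_i(-a² z) holds, where U_i(z) = z(1+z)^{n-i}(az+b)^{i-1}, a = (1+√5)/2, b = (1-√5)/2. -/

import Mathlib

theorem stmt_3 (n : ℕ) (hn : 0 < n) (i : ℕ) (hi1 : 1 ≤ i) (hin : i ≤ n)
    (a b : ℝ) (ha : a = (1 + Real.sqrt 5) / 2) (hb : b = (1 - Real.sqrt 5) / 2)
    (U : ℕ → ℝ → ℝ) (hU : ∀ i z, U i z = z * (1 + z) ^ (n - i) * (a * z + b) ^ (i - 1)) :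
    ∀ z : ℝ, z * (1 + b + z * (1 + a)) ^ (i - 1) * (a * z + b) ^ (n - i) =
      (-1 : ℝ) ^ n * a ^ (-(n : ℤ) - 1) * U i (-a ^ 2 * z) := by
  intro z
  have hs : Real.sqrt 5 ^ 2 = 5 := Real.sq_sqrt (by norm_num)
  have ha0 : a ≠ 0 := by
    rw [ha]
    have : 0 ≤ Real.sqrt 5 := Real.sqrt_nonneg 5
    positivity
  have hab : a * b = -1 := by rw [ha, hb]; linear_combination -hs / 4
  have ha2 : a ^ 2 = a + 1 := by rw [ha]; linear_combination hs / 4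
  have hb1 : b = 1 - a := by rw [ha, hb]; ring
  have h1 : 1 + -a ^ 2 * z = -a * (a * z + b) := by linear_combination hab
  have h2 : a * (-a ^ 2 * z) + b = -a * (1 + b + z * (1 + a)) := by
    linear_combination hab + hb1 + (-a * z) * ha2
  rw [hU, h1, h2,
    show (-(n : ℤ) - 1) = -((n + 1 : ℕ) : ℤ) by push_cast; ring,
    zpow_neg, zpow_natCast, mul_pow, mul_pow]
  have hpow : a ^ (n + 1) = a ^ 2 * a ^ (n - 1) := by
    rw [← pow_add]; congr 1; omega
  have h3 : (-1 : ℝ) ^ n * (-1 : ℝ) ^ (n - 1) = -1 := by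
    rw [← pow_add, show n + (n - 1) = 2 * (n - 1) + 1 by omega, pow_succ, pow_mul]
    norm_num
  have hc : (-1 : ℝ) ^ n * (a ^ (n + 1))⁻¹ * (-a ^ 2) *
      ((-a) ^ (n - i) * (-a) ^ (i - 1)) = 1 := by
    rw [← pow_add, show n - i + (i - 1) = n - 1 by omega, neg_pow, hpow]
    field_simp
    linear_combination (-(a ^ (n - 1))) * h3
  calc z * (1 + b + z * (1 + a)) ^ (i - 1) * (a * z + b) ^ (n - i)
      = ((-1 : ℝ) ^ n * (a ^ (n + 1))⁻¹ * (-a ^ 2) *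
          ((-a) ^ (n - i) * (-a) ^ (i - 1))) *
          (z * (1 + b + z * (1 + a)) ^ (i - 1) * (a * z + b) ^ (n - i)) := by
        rw [hc, one_mul]
    _ = (-1 : ℝ) ^ n * (a ^ (n + 1))⁻¹ *
          (-a ^ 2 * z * ((-a) ^ (n - i) * (a * z + b) ^ (n - i)) *
            ((-a) ^ (i - 1) * (1 + b + z * (1 + a)) ^ (i - 1))) := by ring
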